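/- Let D^A ≥ 0, Γ^A > 0 be symmetric n×n matrices and A_m ∈ R^{n×n}. Suppose there exists F ∈ R^{n×n} such that D^A - (F - A_m) Γ^A (F - A_m)^T ≥ 0 and F has eigenvalue 1 (i.e., F x = x for some nonzero x ∈ R^n). Then the matrix (A_m - I) Γ^A (A_m - I)^T - D^A is not positive definite, i.e., there is a nonzero vector x with x^T ((A_m - I) Γ^A (A_m - I)^T - D^A) x ≤ 0. -/

import Mathlib

open Matrix

theorem stmt_14 (n : ℕ)
    (Am DA ΓA : Matrix (Fin n) (Fin n) ℝ)
    (hD : DA.PosSemidef) (hΓ : ΓA.PosDef)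
    (F : Matrix (Fin n) (Fin n) ℝ)
    (hF : (DA - (F - Am) * ΓA * (F - Am)ᵀ).PosSemidef)
    (x : Fin n → ℝ) (hx : x ≠ 0) (heig : F *ᵥ x = x) :
    ∃ y : Fin n → ℝ, y ≠ 0 ∧
      y ⬝ᵥ (((Am - 1) * ΓA * (Am - 1)ᵀ - DA) *ᵥ y) ≤ 0 := by
  -- F - 1 is singular
  have hker : (F - 1) *ᵥ x = 0 := by
    rw [sub_mulVec, one_mulVec, heig, sub_self]
  have hdet : (F - 1).det = 0 := by
    rw [← Matrix.exists_mulVec_eq_zero_iff]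
    exact ⟨x, hx, hker⟩
  -- hence Fᵀ - 1 is singular: get y ≠ 0 with Fᵀ y = y
  have hdetT : (Fᵀ - 1).det = 0 := by
    rw [show Fᵀ - 1 = (F - 1)ᵀ by rw [transpose_sub, transpose_one],
      Matrix.det_transpose]
    exact hdet
  obtain ⟨y, hy, hFy⟩ := (Matrix.exists_mulVec_eq_zero_iff).2 hdetT
  have hFy' : Fᵀ *ᵥ y = y := by
    have := hFy
    rw [sub_mulVec, one_mulVec, sub_eq_zero] at this
    exact this
  refine ⟨y, hy, ?_⟩
  -- quadratic form identity
  have key : ∀ A : Matrix (Fin n) (Fin n) ℝ,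
      y ⬝ᵥ ((A * ΓA * Aᵀ) *ᵥ y) = (Aᵀ *ᵥ y) ⬝ᵥ (ΓA *ᵥ (Aᵀ *ᵥ y)) := by
    intro A
    rw [← mulVec_mulVec, ← mulVec_mulVec, dotProduct_mulVec, ← mulVec_transpose]
  have hvec : (Am - 1)ᵀ *ᵥ y = -((F - Am)ᵀ *ᵥ y) := by
    rw [transpose_sub, transpose_sub, transpose_one, sub_mulVec, sub_mulVec,
      one_mulVec, hFy']
    ring_nf
  have h1 : y ⬝ᵥ (((Am - 1) * ΓA * (Am - 1)ᵀ) *ᵥ y)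
      = y ⬝ᵥ (((F - Am) * ΓA * (F - Am)ᵀ) *ᵥ y) := by
    rw [key, key, hvec, mulVec_neg, dotProduct_neg, neg_dotProduct, neg_neg]
  have h2 := hF.dotProduct_mulVec_nonneg y
  simp only [star_trivial] at h2
  rw [sub_mulVec, dotProduct_sub] at h2
  rw [sub_mulVec, dotProduct_sub, h1]
  linarith
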